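/- Let d ≥ 2, κ ≥ 1, and let (b_ℓ)_{ℓ∈ℕ} be positive reals with κ^{-1} ≤ b_ℓ/(2ℓ+d) ≤ κ for all ℓ. Then there exist constants C and c ≥ 1, depending only on d, κ, such that for all x > 0 and u ∈ ℝ^d with |u| ≥ c·x, the sum over ℓ with 2ℓ+d ≤ x of H_{d,ℓ}(b_ℓ^{-1/2} u) is at most C·exp(-|u|²/(c·x)), where H_{d,ℓ}(u) = Σ_{n∈ℕ^d, n_1+⋯+n_d = ℓ} h_{n_1}²(u_1)⋯h_{n_d}²(u_d). -/

import Mathlib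

/-- The ℓ-th Hermite function. -/
noncomputable def hermiteFun (m : ℕ) (t : ℝ) : ℝ :=
  (-1) ^ m * (Real.sqrt ((m.factorial : ℝ) * 2 ^ m * Real.sqrt Real.pi))⁻¹ *
    Real.exp (t ^ 2 / 2) * iteratedDeriv m (fun u : ℝ => Real.exp (-u ^ 2)) t

/-- H_{d,ℓ}(u) = Σ_{|n|₁ = ℓ} h_{n₁}²(u₁)⋯h_{n_d}²(u_d). -/
noncomputable def HermiteSum (d ℓ : ℕ) (u : Fin d → ℝ) : ℝ :=
  ∑ n ∈ Finset.Nat.antidiagonalTuple d ℓ, ∏ i, hermiteFun (n i) (u i) ^ 2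

open Finset Nat

lemma dfac_sq_le : ∀ r : ℕ, (r‼)^2 ≤ (r+1)!
  | 0 => by decide
  | 1 => by decide
  | (r+2) => by
    have ih := dfac_sq_le r
    rw [Nat.doubleFactorial_add_two]
    calc ((r+2)*r‼)^2 = (r+2)^2 * (r‼)^2 := by ring
    _ ≤ (r+2)^2 * (r+1)! := Nat.mul_le_mul_left _ ih
    _ ≤ ((r+3)*(r+2)) * (r+1)! := Nat.mul_le_mul_right _ (by nlinarith)
    _ = (r+2+1)! := by rw [show r+2+1 = (r+1)+1+1 from rfl, Nat.factorial_succ ((r+1)+1), Nat.factorial_succ (r+1)]; ring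

lemma choose_le_two_pow' (m k : ℕ) : m.choose k ≤ 2^m := by
  rcases le_or_gt k m with h | h
  · calc m.choose k ≤ ∑ j ∈ range (m+1), m.choose j :=
        Finset.single_le_sum (fun j _ => Nat.zero_le _) (mem_range.2 (Nat.lt_succ_of_le h))
    _ = 2^m := Nat.sum_range_choose m
  · rw [Nat.choose_eq_zero_of_lt h]; exact Nat.zero_le _

lemma pow_le_factorial_mul_exp (a : ℝ) (ha : 0 ≤ a) (k : ℕ) :
    a^k ≤ (k ! : ℝ) * Real.exp a := by
  have h1 : a^k / (k ! : ℝ) ≤ Real.exp a := by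
    have h2 : a^k/(k ! : ℝ) ≤ ∑ i ∈ range (k+1), a^i / (i ! : ℝ) :=
      Finset.single_le_sum (f := fun i => a^i / (i ! : ℝ))
        (fun i _ => by positivity) (mem_range.2 (Nat.lt_succ_self k))
    exact h2.trans (Real.sum_le_exp_of_nonneg ha _)
  have hk : (0:ℝ) < k ! := by exact_mod_cast Nat.factorial_pos k
  rw [div_le_iff₀ hk] at h1; linarith

lemma abs_coeff_hermite_le (m k : ℕ) :
    |((Polynomial.hermite m).coeff k : ℝ)| ≤ ((m-k-1)‼ : ℝ) * (m.choose k : ℝ) := by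
  rw [Polynomial.coeff_hermite]
  split_ifs with h
  · push_cast
    rw [abs_mul, abs_mul, abs_pow, abs_neg, abs_one, one_pow, one_mul,
      Nat.abs_cast, Nat.abs_cast]
  · simp; positivity

lemma abs_aeval_hermite_le (m : ℕ) (y : ℝ) :
    |Polynomial.aeval y (Polynomial.hermite m)| ≤
      ∑ k ∈ Finset.range (m+1), ((m-k-1)‼ : ℝ) * (m.choose k : ℝ) * |y|^k := by
  rw [Polynomial.aeval_eq_sum_range, Polynomial.natDegree_hermite]
  refine (Finset.abs_sum_le_sum_abs _ _).trans (Finset.sum_le_sum fun k _ => ?_)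
  rw [zsmul_eq_mul, abs_mul, abs_pow]
  exact mul_le_mul_of_nonneg_right (abs_coeff_hermite_le m k) (by positivity)

lemma dfac_sq_le' (m k : ℕ) : ((m-k-1)‼)^2 ≤ (m-k)! := by
  rcases Nat.eq_zero_or_pos (m-k) with h | h
  · rw [show m - k - 1 = 0 by omega, h]; simp [Nat.doubleFactorial]
  · obtain ⟨s, hs⟩ := Nat.exists_eq_succ_of_ne_zero h.ne'
    rw [show m - k - 1 = s by omega, hs]
    exact dfac_sq_le s

lemma term_sq_le (m k : ℕ) (hk : k ≤ m) (y : ℝ) :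
    (((m-k-1)‼ : ℝ) * (m.choose k : ℝ) * |y|^k)^2
      ≤ 4^m * 8^m * (m ! : ℝ) * Real.exp (y^2/8) := by
  have h1 : (((m-k-1)‼ : ℝ))^2 ≤ ((m-k)! : ℝ) := by exact_mod_cast dfac_sq_le' m k
  have h2 : ((m.choose k : ℝ))^2 ≤ 4^m := by
    have := choose_le_two_pow' m k
    have : ((m.choose k : ℝ)) ≤ 2^m := by exact_mod_cast this
    have h4 : ((2:ℝ)^m)^2 = 4^m := by
      rw [← pow_mul, mul_comm, pow_mul]; norm_num
    nlinarith [Nat.cast_nonneg (α := ℝ) (m.choose k)]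
  have h3 : (|y|^k)^2 ≤ 8^k * ((k ! : ℝ) * Real.exp (y^2/8)) := by
    have := pow_le_factorial_mul_exp (y^2/8) (by positivity) k
    have h8 : ((y^2/8))^k = (y^2)^k / 8^k := div_pow _ _ _
    rw [h8] at this
    rw [div_le_iff₀ (by positivity : (0:ℝ) < 8^k)] at this
    calc (|y|^k)^2 = (|y|^2)^k := by rw [← pow_mul, ← pow_mul, mul_comm]
    _ = (y^2)^k := by rw [sq_abs]
    _ ≤ (k ! : ℝ) * Real.exp (y^2/8) * 8^k := this
    _ = 8^k * ((k ! : ℝ) * Real.exp (y^2/8)) := by ring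
  have h4 : ((m-k)! : ℝ) * (k ! : ℝ) ≤ (m ! : ℝ) := by
    have hd : k ! * (m-k)! ∣ m ! := Nat.factorial_mul_factorial_dvd_factorial hk
    have := Nat.le_of_dvd (Nat.factorial_pos m) hd
    have : ((k ! * (m-k)! : ℕ) : ℝ) ≤ (m ! : ℝ) := by exact_mod_cast this
    push_cast at this; linarith
  have h8k : (8:ℝ)^k ≤ 8^m := pow_le_pow_right₀ (by norm_num) hk
  have he : (0:ℝ) < Real.exp (y^2/8) := Real.exp_pos _
  have hck : (0:ℝ) ≤ (m.choose k : ℝ) := Nat.cast_nonneg _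
  have hdf : (0:ℝ) ≤ ((m-k-1)‼ : ℝ) := Nat.cast_nonneg _
  have hyk : (0:ℝ) ≤ |y|^k := by positivity
  have hfk : (0:ℝ) ≤ (k ! : ℝ) := Nat.cast_nonneg _
  have hfmk : (0:ℝ) ≤ ((m-k)! : ℝ) := Nat.cast_nonneg _
  calc (((m-k-1)‼ : ℝ) * (m.choose k : ℝ) * |y|^k)^2
      = (((m-k-1)‼ : ℝ))^2 * ((m.choose k : ℝ))^2 * (|y|^k)^2 := by ring
    _ ≤ ((m-k)! : ℝ) * 4^m * (8^k * ((k ! : ℝ) * Real.exp (y^2/8))) := by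
        have e1 : (((m-k-1)‼ : ℝ))^2 * ((m.choose k : ℝ))^2 ≤ ((m-k)! : ℝ) * 4^m :=
          mul_le_mul h1 h2 (by positivity) hfmk
        exact mul_le_mul e1 h3 (by positivity) (by positivity)
    _ = 4^m * 8^k * (((m-k)! : ℝ) * (k ! : ℝ)) * Real.exp (y^2/8) := by ring
    _ ≤ 4^m * 8^m * (m ! : ℝ) * Real.exp (y^2/8) := by
        have := mul_le_mul (mul_le_mul_of_nonneg_left h8k (by positivity : (0:ℝ) ≤ 4^m)) h4
          (by positivity) (by positivity)
        exact mul_le_mul_of_nonneg_right this he.le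

lemma S_sq_le (m : ℕ) (y : ℝ) :
    (∑ k ∈ Finset.range (m+1), ((m-k-1)‼ : ℝ) * (m.choose k : ℝ) * |y|^k)^2
      ≤ 4 * 128^m * (m ! : ℝ) * Real.exp (y^2/8) := by
  have cs := sq_sum_le_card_mul_sum_sq (s := Finset.range (m+1))
    (f := fun k => ((m-k-1)‼ : ℝ) * (m.choose k : ℝ) * |y|^k)
  rw [Finset.card_range] at cs
  have hsum : ∑ k ∈ Finset.range (m+1), (((m-k-1)‼ : ℝ) * (m.choose k : ℝ) * |y|^k)^2
      ≤ (m+1 : ℝ) * (4^m * 8^m * (m ! : ℝ) * Real.exp (y^2/8)) := by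
    calc ∑ k ∈ Finset.range (m+1), (((m-k-1)‼ : ℝ) * (m.choose k : ℝ) * |y|^k)^2
        ≤ ∑ _k ∈ Finset.range (m+1), 4^m * 8^m * (m ! : ℝ) * Real.exp (y^2/8) :=
          Finset.sum_le_sum fun k hk =>
            term_sq_le m k (Nat.lt_succ_iff.mp (Finset.mem_range.mp hk)) y
      _ = (m+1 : ℝ) * (4^m * 8^m * (m ! : ℝ) * Real.exp (y^2/8)) := by
          rw [Finset.sum_const, Finset.card_range]; push_cast; ring
  have hm1 : ((m:ℝ)+1) ≤ 2 * 2^m := by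
    have : m + 1 ≤ 2^(m+1) := (Nat.lt_two_pow_self (n := m+1)).le
    have : ((m+1 : ℕ) : ℝ) ≤ ((2^(m+1) : ℕ) : ℝ) := by exact_mod_cast this
    rw [pow_succ] at this; push_cast at this; linarith [this]
  have key : ((m:ℝ)+1) * ((m+1 : ℝ) * (4^m * 8^m * (m ! : ℝ) * Real.exp (y^2/8)))
      ≤ 4 * 128^m * (m ! : ℝ) * Real.exp (y^2/8) := by
    have h128 : (4:ℝ)^m * (4^m * 8^m) = 128^m := by
      rw [← mul_pow, ← mul_pow]; norm_num
    have hpos : (0:ℝ) ≤ 4^m * 8^m * (m ! : ℝ) * Real.exp (y^2/8) := by positivity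
    have h2 : ((m:ℝ)+1) * ((m:ℝ)+1) ≤ (2*2^m) * (2*2^m) := by
      nlinarith [hm1, Nat.cast_nonneg (α := ℝ) m]
    calc ((m:ℝ)+1) * ((m+1 : ℝ) * (4^m * 8^m * (m ! : ℝ) * Real.exp (y^2/8)))
        = (((m:ℝ)+1) * ((m:ℝ)+1)) * (4^m * 8^m * (m ! : ℝ) * Real.exp (y^2/8)) := by ring
      _ ≤ ((2*2^m) * (2*2^m)) * (4^m * 8^m * (m ! : ℝ) * Real.exp (y^2/8)) :=
          mul_le_mul_of_nonneg_right h2 hpos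
      _ = 4 * (4^m * (4^m * 8^m)) * (m ! : ℝ) * Real.exp (y^2/8) := by
          have : (2:ℝ)^m * 2^m = 4^m := by rw [← mul_pow]; norm_num
          nlinarith [this]
      _ = 4 * 128^m * (m ! : ℝ) * Real.exp (y^2/8) := by rw [h128]
  calc (∑ k ∈ Finset.range (m+1), ((m-k-1)‼ : ℝ) * (m.choose k : ℝ) * |y|^k)^2
      ≤ (m+1 : ℝ) * ∑ k ∈ Finset.range (m+1), (((m-k-1)‼ : ℝ) * (m.choose k : ℝ) * |y|^k)^2 := by
        exact_mod_cast cs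
    _ ≤ ((m:ℝ)+1) * ((m+1 : ℝ) * (4^m * 8^m * (m ! : ℝ) * Real.exp (y^2/8))) := by
        have : (0:ℝ) ≤ (m:ℝ)+1 := by positivity
        push_cast
        exact mul_le_mul_of_nonneg_left hsum this
    _ ≤ 4 * 128^m * (m ! : ℝ) * Real.exp (y^2/8) := key

lemma hermiteFun_eq (m : ℕ) (t : ℝ) :
    hermiteFun m t = (Real.sqrt ((m.factorial : ℝ) * 2 ^ m * Real.sqrt Real.pi))⁻¹ *
      ((Real.sqrt 2)^m * (Polynomial.aeval (Real.sqrt 2 * t) (Polynomial.hermite m) *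
        Real.exp (-(t^2/2)))) := by
  have h2 : (Real.sqrt 2)^2 = 2 := Real.sq_sqrt (by norm_num)
  have hg : ContDiff ℝ (m : ℕ∞) (fun y : ℝ => Real.exp (-(y^2/2))) := by
    apply ContDiff.exp; apply ContDiff.neg
    exact (contDiff_id.pow 2).div_const 2
  have hfun : (fun u : ℝ => Real.exp (-u^2)) =
      (fun x : ℝ => (fun y : ℝ => Real.exp (-(y^2/2))) (Real.sqrt 2 * x)) := by
    funext x
    simp only []
    congr 1
    rw [mul_pow, h2]
    ring
  have hscale := iteratedDeriv_comp_const_mul hg (Real.sqrt 2)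
  have hd : iteratedDeriv m (fun u : ℝ => Real.exp (-u^2)) t
      = (Real.sqrt 2)^m * iteratedDeriv m (fun y : ℝ => Real.exp (-(y^2/2))) (Real.sqrt 2 * t) := by
    rw [hfun, hscale]
  have hherm : iteratedDeriv m (fun y : ℝ => Real.exp (-(y^2/2))) (Real.sqrt 2 * t)
      = (-1 : ℝ)^m * Polynomial.aeval (Real.sqrt 2 * t) (Polynomial.hermite m) *
        Real.exp (-((Real.sqrt 2 * t)^2/2)) := by
    rw [iteratedDeriv_eq_iterate]
    exact Polynomial.deriv_gaussian_eq_hermite_mul_gaussian m _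
  have hsq : ((Real.sqrt 2 * t)^2/2) = t^2 := by rw [mul_pow, h2]; ring
  rw [hermiteFun, hd, hherm, hsq]
  have hone : ((-1:ℝ))^m * (-1:ℝ)^m = 1 := by rw [← mul_pow]; norm_num
  have hee : Real.exp (t^2/2) * Real.exp (-t^2) = Real.exp (-(t^2/2)) := by
    rw [← Real.exp_add]; congr 1; ring
  calc (-1:ℝ)^m * (Real.sqrt ((m.factorial : ℝ) * 2 ^ m * Real.sqrt Real.pi))⁻¹ *
        Real.exp (t^2/2) * ((Real.sqrt 2)^m * ((-1:ℝ)^m *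
          Polynomial.aeval (Real.sqrt 2 * t) (Polynomial.hermite m) * Real.exp (-t^2)))
      = ((-1:ℝ)^m * (-1:ℝ)^m) *
          ((Real.sqrt ((m.factorial : ℝ) * 2 ^ m * Real.sqrt Real.pi))⁻¹ *
          ((Real.sqrt 2)^m * (Polynomial.aeval (Real.sqrt 2 * t) (Polynomial.hermite m) *
            (Real.exp (t^2/2) * Real.exp (-t^2))))) := by ring
    _ = (Real.sqrt ((m.factorial : ℝ) * 2 ^ m * Real.sqrt Real.pi))⁻¹ *
          ((Real.sqrt 2)^m * (Polynomial.aeval (Real.sqrt 2 * t) (Polynomial.hermite m) *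
            Real.exp (-(t^2/2)))) := by rw [hone, hee, one_mul]

lemma hermiteFun_sq_le (m : ℕ) (t : ℝ) :
    hermiteFun m t ^ 2 ≤ 4 * 128^m * Real.exp (-(t^2)/2) := by
  have hfac : (0:ℝ) < (m ! : ℝ) := by exact_mod_cast Nat.factorial_pos m
  have hpi : (1:ℝ) ≤ Real.sqrt Real.pi := by
    rw [show (1:ℝ) = Real.sqrt 1 from (Real.sqrt_one).symm]
    exact Real.sqrt_le_sqrt (by linarith [Real.pi_gt_three])
  have hX : (0:ℝ) < (m ! : ℝ) * 2^m * Real.sqrt Real.pi := by positivity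
  set P := Polynomial.aeval (Real.sqrt 2 * t) (Polynomial.hermite m) with hP
  have h2 : (Real.sqrt 2)^2 = 2 := Real.sq_sqrt (by norm_num)
  have hsq : hermiteFun m t ^ 2 = ((m ! : ℝ) * Real.sqrt Real.pi)⁻¹ * (P^2 * Real.exp (-t^2)) := by
    rw [hermiteFun_eq]
    have e1 : ((Real.sqrt ((m ! : ℝ) * 2^m * Real.sqrt Real.pi))⁻¹)^2
        = ((m ! : ℝ) * 2^m * Real.sqrt Real.pi)⁻¹ := by
      rw [inv_pow, Real.sq_sqrt hX.le]
    have e2 : ((Real.sqrt 2)^m)^2 = 2^m := by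
      rw [← pow_mul, mul_comm, pow_mul, h2]
    have e3 : (Real.exp (-(t^2/2)))^2 = Real.exp (-t^2) := by
      rw [sq, ← Real.exp_add]; congr 1; ring
    rw [mul_pow, mul_pow, mul_pow, e1, e2, e3]
    rw [show ((m ! : ℝ) * 2^m * Real.sqrt Real.pi)⁻¹ = ((m ! : ℝ) * Real.sqrt Real.pi)⁻¹ * (2^m)⁻¹
      from by rw [← mul_inv]; congr 1; ring]
    field_simp
    ring
  have hPb : P^2 ≤ 4 * 128^m * (m ! : ℝ) * Real.exp (t^2/4) := by
    have habs := abs_aeval_hermite_le m (Real.sqrt 2 * t)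
    have hS := S_sq_le m (Real.sqrt 2 * t)
    have hy : (Real.sqrt 2 * t)^2/8 = t^2/4 := by rw [mul_pow, h2]; ring
    rw [hy] at hS
    calc P^2 = |P|^2 := (sq_abs P).symm
    _ ≤ (∑ k ∈ Finset.range (m+1), ((m-k-1)‼ : ℝ) * (m.choose k : ℝ) * |Real.sqrt 2 * t|^k)^2 :=
        pow_le_pow_left₀ (abs_nonneg _) habs 2
    _ ≤ 4 * 128^m * (m ! : ℝ) * Real.exp (t^2/4) := hS
  calc hermiteFun m t ^ 2
      = ((m ! : ℝ) * Real.sqrt Real.pi)⁻¹ * (P^2 * Real.exp (-t^2)) := hsq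
    _ ≤ ((m ! : ℝ) * Real.sqrt Real.pi)⁻¹ *
        ((4 * 128^m * (m ! : ℝ) * Real.exp (t^2/4)) * Real.exp (-t^2)) := by
        apply mul_le_mul_of_nonneg_left _ (by positivity)
        exact mul_le_mul_of_nonneg_right hPb (Real.exp_pos _).le
    _ = 4 * 128^m * (Real.sqrt Real.pi)⁻¹ * Real.exp (t^2/4 + -t^2) := by
        rw [Real.exp_add]; field_simp
    _ ≤ 4 * 128^m * 1 * Real.exp (-(t^2)/2) := by
        apply mul_le_mul
        · apply mul_le_mul_of_nonneg_left _ (by positivity)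
          rw [inv_le_one_iff₀]; right; exact hpi
        · exact Real.exp_le_exp.mpr (by nlinarith [sq_nonneg t])
        · exact (Real.exp_pos _).le
        · positivity
    _ = 4 * 128^m * Real.exp (-(t^2)/2) := by ring

lemma prod_term_le {d ℓ : ℕ} (t : Fin d → ℝ) (n : Fin d → ℕ) (hn : ∑ i, n i = ℓ) :
    ∏ i, hermiteFun (n i) (t i)^2 ≤ 4^d * 128^ℓ * Real.exp (-(∑ i, (t i)^2)/2) := by
  have hexp : ∑ i : Fin d, (-((t i)^2)/2) = -(∑ i, (t i)^2)/2 := by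
    simp [neg_div, Finset.sum_neg_distrib, Finset.sum_div]
  calc ∏ i, hermiteFun (n i) (t i)^2
      ≤ ∏ i, (4 * 128^(n i) * Real.exp (-((t i)^2)/2)) :=
      Finset.prod_le_prod (fun i _ => sq_nonneg _) (fun i _ => hermiteFun_sq_le (n i) (t i))
    _ = (∏ _i : Fin d, (4:ℝ)) * (∏ i, (128:ℝ)^(n i)) * ∏ i, Real.exp (-((t i)^2)/2) := by
        rw [← Finset.prod_mul_distrib, ← Finset.prod_mul_distrib]
    _ = 4^d * 128^ℓ * Real.exp (-(∑ i, (t i)^2)/2) := by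
        rw [Finset.prod_const, ← Real.exp_sum, Finset.prod_pow_eq_pow_sum, hn, hexp]
        congr 2
        simp

lemma card_antidiagonalTuple_le (d ℓ : ℕ) :
    (Finset.Nat.antidiagonalTuple d ℓ).card ≤ ((2:ℕ)^d)^ℓ := by
  have hsub : Finset.Nat.antidiagonalTuple d ℓ ⊆ Fintype.piFinset (fun _ : Fin d => Finset.range (ℓ+1)) := by
    intro n hn
    rw [Finset.Nat.mem_antidiagonalTuple] at hn
    rw [Fintype.mem_piFinset]
    intro i
    rw [Finset.mem_range]
    have : n i ≤ ℓ := hn ▸ Finset.single_le_sum (f := n) (fun j _ => Nat.zero_le _) (Finset.mem_univ i)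
    omega
  calc (Finset.Nat.antidiagonalTuple d ℓ).card
      ≤ (Fintype.piFinset (fun _ : Fin d => Finset.range (ℓ+1))).card := Finset.card_le_card hsub
    _ = (ℓ+1)^d := by rw [Fintype.card_piFinset]; simp
    _ ≤ (2^ℓ)^d := Nat.pow_le_pow_left (Nat.lt_two_pow_self (n := ℓ)) d
    _ = (2^d)^ℓ := by rw [← pow_mul, mul_comm, pow_mul]

lemma hermiteSum_le (d ℓ : ℕ) (t : Fin d → ℝ) :
    HermiteSum d ℓ t ≤ 4^d * ((2:ℝ)^d * 128)^ℓ * Real.exp (-(∑ i, (t i)^2)/2) := by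
  have hbound : ∀ n ∈ Finset.Nat.antidiagonalTuple d ℓ,
      ∏ i, hermiteFun (n i) (t i)^2 ≤ 4^d * 128^ℓ * Real.exp (-(∑ i, (t i)^2)/2) := by
    intro n hn
    exact prod_term_le t n (Finset.Nat.mem_antidiagonalTuple.mp hn)
  have hcard : ((Finset.Nat.antidiagonalTuple d ℓ).card : ℝ) ≤ ((2:ℝ)^d)^ℓ := by
    have := card_antidiagonalTuple_le d ℓ
    exact_mod_cast this
  calc HermiteSum d ℓ t
      ≤ ((Finset.Nat.antidiagonalTuple d ℓ).card : ℝ) * (4^d * 128^ℓ * Real.exp (-(∑ i, (t i)^2)/2)) := by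
        rw [HermiteSum]
        have := Finset.sum_le_card_nsmul _ _ _ hbound
        rwa [nsmul_eq_mul] at this
    _ ≤ ((2:ℝ)^d)^ℓ * (4^d * 128^ℓ * Real.exp (-(∑ i, (t i)^2)/2)) :=
        mul_le_mul_of_nonneg_right hcard (by positivity)
    _ = 4^d * ((2:ℝ)^d * 128)^ℓ * Real.exp (-(∑ i, (t i)^2)/2) := by
        rw [mul_pow]; ring

set_option maxHeartbeats 1000000 in
theorem hermite_sum_gaussian_decay (d : ℕ) (hd : 2 ≤ d) (κ : ℝ) (hκ : 1 ≤ κ)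
    (b : ℕ → ℝ) (hb : ∀ ℓ, 0 < b ℓ)
    (hκb : ∀ ℓ : ℕ, κ⁻¹ ≤ b ℓ / (2 * ℓ + d) ∧ b ℓ / (2 * ℓ + d) ≤ κ) :
    ∃ C c : ℝ, 1 ≤ c ∧ ∀ x : ℝ, 0 < x → ∀ u : EuclideanSpace ℝ (Fin d), c * x ≤ ‖u‖ →
      (∑ ℓ ∈ (Finset.range (⌈x⌉₊ + 1)).filter (fun ℓ : ℕ => 2 * (ℓ:ℝ) + d ≤ x),
          HermiteSum d ℓ (fun i => (Real.sqrt (b ℓ))⁻¹ * u i))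
        ≤ C * Real.exp (-‖u‖ ^ 2 / (c * x)) := by
  set A : ℝ := (2:ℝ)^d * 128 with hA
  set L : ℝ := 1 + A/2 with hL
  have hA0 : (0:ℝ) < A := by positivity
  have hL1 : (1:ℝ) ≤ L := by rw [hL]; linarith
  set c : ℝ := 4 * κ * L with hc
  have hκ0 : (0:ℝ) < κ := lt_of_lt_of_le one_pos hκ
  have hc4 : 4 * κ ≤ c := by rw [hc]; nlinarith
  have hc1 : (1:ℝ) ≤ c := by nlinarith
  refine ⟨(4:ℝ)^d * Real.exp 2, c, hc1, ?_⟩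
  intro x hx u hu
  have hc0 : (0:ℝ) < c := lt_of_lt_of_le one_pos hc1
  set N : ℝ := ‖u‖^2 with hN
  have hN0 : (0:ℝ) ≤ N := sq_nonneg _
  have hNsum : N = ∑ i, (u i)^2 := by
    rw [hN, EuclideanSpace.norm_eq, Real.sq_sqrt (by positivity)]
    congr 1; funext i; rw [Real.norm_eq_abs, sq_abs]
  have hNc : c^2 * x^2 ≤ N := by
    have := pow_le_pow_left₀ (by positivity : (0:ℝ) ≤ c * x) hu 2
    rw [mul_pow] at this; exact this
  have hd2 : (2:ℝ) ≤ (d:ℝ) := by exact_mod_cast hd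
  -- per-term bound
  have hterm : ∀ ℓ ∈ (Finset.range (⌈x⌉₊ + 1)).filter (fun ℓ : ℕ => 2 * (ℓ:ℝ) + d ≤ x),
      HermiteSum d ℓ (fun i => (Real.sqrt (b ℓ))⁻¹ * u i)
        ≤ 4^d * Real.exp (A * x / 2) * Real.exp (-N / (2 * κ * x)) := by
    intro ℓ hℓ
    have hxl : 2 * (ℓ:ℝ) + d ≤ x := (Finset.mem_filter.mp hℓ).2
    have h2ld : (0:ℝ) < 2 * (ℓ:ℝ) + d := by positivity
    have hbl : b ℓ ≤ κ * x := by
      have h1 := (hκb ℓ).2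
      rw [div_le_iff₀ h2ld] at h1
      calc b ℓ ≤ κ * (2 * (ℓ:ℝ) + d) := h1
      _ ≤ κ * x := by nlinarith
    have hsum_t : ∑ i, ((Real.sqrt (b ℓ))⁻¹ * u i)^2 = N / b ℓ := by
      simp only [mul_pow]
      rw [← Finset.mul_sum, ← hNsum, inv_pow, Real.sq_sqrt (hb ℓ).le,
        div_eq_inv_mul]
    have h1 := hermiteSum_le d ℓ (fun i => (Real.sqrt (b ℓ))⁻¹ * u i)
    rw [hsum_t] at h1
    have hAl : A^ℓ ≤ Real.exp (A * x / 2) := by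
      have h2 : A ≤ Real.exp A := by linarith [Real.add_one_le_exp A]
      calc A^ℓ ≤ (Real.exp A)^ℓ := pow_le_pow_left₀ hA0.le h2 ℓ
      _ = Real.exp ((ℓ:ℝ) * A) := by rw [← Real.exp_nat_mul]
      _ ≤ Real.exp (A * x / 2) := Real.exp_le_exp.mpr (by nlinarith)
    have hexp2 : Real.exp (-(N / b ℓ) / 2) ≤ Real.exp (-N / (2 * κ * x)) := by
      apply Real.exp_le_exp.mpr
      have h3 : N / (2 * κ * x) ≤ N / (2 * b ℓ) :=
        div_le_div_of_nonneg_left hN0 (by linarith [hb ℓ]) (by nlinarith)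
      rw [neg_div, neg_div, neg_le_neg_iff]
      calc N / (2 * κ * x) ≤ N / (2 * b ℓ) := h3
      _ = N / b ℓ / 2 := by rw [div_div]; ring_nf
    calc HermiteSum d ℓ (fun i => (Real.sqrt (b ℓ))⁻¹ * u i)
        ≤ 4^d * A^ℓ * Real.exp (-(N / b ℓ) / 2) := h1
      _ ≤ 4^d * Real.exp (A * x / 2) * Real.exp (-N / (2 * κ * x)) := by
          apply mul_le_mul _ hexp2 (Real.exp_pos _).le (by positivity)
          exact mul_le_mul_of_nonneg_left hAl (by positivity)
  -- sum over ℓ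
  have hcard : (((Finset.range (⌈x⌉₊ + 1)).filter (fun ℓ : ℕ => 2 * (ℓ:ℝ) + d ≤ x)).card : ℝ)
      ≤ Real.exp (x + 2) := by
    have h1 : ((Finset.range (⌈x⌉₊ + 1)).filter (fun ℓ : ℕ => 2 * (ℓ:ℝ) + d ≤ x)).card
        ≤ ⌈x⌉₊ + 1 := by
      calc _ ≤ (Finset.range (⌈x⌉₊ + 1)).card := Finset.card_le_card (Finset.filter_subset _ _)
      _ = ⌈x⌉₊ + 1 := Finset.card_range _
    have h2 : ((⌈x⌉₊:ℝ) + 1) ≤ x + 2 := by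
      have := Nat.ceil_lt_add_one hx.le
      linarith
    have h3 : x + 2 ≤ Real.exp (x + 2) := by
      have h4 := Real.add_one_le_exp (x + 1)
      have h5 : Real.exp (x + 1) ≤ Real.exp (x + 2) := Real.exp_le_exp.mpr (by linarith)
      linarith
    calc (((Finset.range (⌈x⌉₊ + 1)).filter (fun ℓ : ℕ => 2 * (ℓ:ℝ) + d ≤ x)).card : ℝ)
        ≤ (⌈x⌉₊:ℝ) + 1 := by exact_mod_cast h1
      _ ≤ x + 2 := h2
      _ ≤ Real.exp (x + 2) := h3
  have hsum : (∑ ℓ ∈ (Finset.range (⌈x⌉₊ + 1)).filter (fun ℓ : ℕ => 2 * (ℓ:ℝ) + d ≤ x),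
      HermiteSum d ℓ (fun i => (Real.sqrt (b ℓ))⁻¹ * u i))
      ≤ Real.exp (x + 2) * (4^d * Real.exp (A * x / 2) * Real.exp (-N / (2 * κ * x))) := by
    calc _ ≤ (((Finset.range (⌈x⌉₊ + 1)).filter (fun ℓ : ℕ => 2 * (ℓ:ℝ) + d ≤ x)).card : ℝ)
        * (4^d * Real.exp (A * x / 2) * Real.exp (-N / (2 * κ * x))) := by
          have := Finset.sum_le_card_nsmul _ _ _ hterm
          rwa [nsmul_eq_mul] at this
      _ ≤ Real.exp (x + 2) * (4^d * Real.exp (A * x / 2) * Real.exp (-N / (2 * κ * x))) :=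
          mul_le_mul_of_nonneg_right hcard (by positivity)
  -- exponent comparison
  have hL0 : (0:ℝ) < L := lt_of_lt_of_le one_pos hL1
  have hexpo : L * x + N / (c * x) ≤ N / (2 * κ * x) := by
    have hcx : (0:ℝ) < c * x := mul_pos hc0 hx
    have hkx : (0:ℝ) < 2 * κ * x := mul_pos (mul_pos two_pos hκ0) hx
    have e : L * x + N / (c * x) = (L * x * (c * x) + N) / (c * x) := by
      field_simp
    rw [e, div_le_div_iff₀ hcx hkx]
    have hkey := mul_le_mul_of_nonneg_left hNc
      (le_of_lt (mul_pos (mul_pos (mul_pos two_pos hκ0) hL0) hx))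
    have h1 : (0:ℝ) ≤ c - 2*κ - 2*κ*L := by rw [hc]; nlinarith
    have f1 : (0:ℝ) ≤ (c - 2*κ - 2*κ*L) * (x*N) :=
      mul_nonneg h1 (mul_nonneg hx.le hN0)
    have f3 : (0:ℝ) ≤ 2*κ*L*(c*(x^3))*(c-1) := by
      apply mul_nonneg _ (by linarith)
      exact mul_nonneg (mul_nonneg (mul_nonneg (by norm_num) hκ0.le) hL0.le)
        (mul_nonneg hc0.le (pow_nonneg hx.le 3))
    nlinarith [f1, hkey, f3]
  calc (∑ ℓ ∈ (Finset.range (⌈x⌉₊ + 1)).filter (fun ℓ : ℕ => 2 * (ℓ:ℝ) + d ≤ x),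
      HermiteSum d ℓ (fun i => (Real.sqrt (b ℓ))⁻¹ * u i))
      ≤ Real.exp (x + 2) * (4^d * Real.exp (A * x / 2) * Real.exp (-N / (2 * κ * x))) := hsum
    _ = 4^d * Real.exp 2 * (Real.exp (L * x) * Real.exp (-N / (2 * κ * x))) := by
        rw [show x + 2 = 2 + (x:ℝ) from by ring, Real.exp_add]
        rw [show L * x = x + A * x / 2 from by rw [hL]; ring, Real.exp_add]
        ring
    _ ≤ 4^d * Real.exp 2 * Real.exp (-N / (c * x)) := by
        apply mul_le_mul_of_nonneg_left _ (by positivity)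
        rw [← Real.exp_add]
        apply Real.exp_le_exp.mpr
        have : -N / (c * x) = -(N / (c * x)) := by rw [neg_div]
        rw [this]
        have h2 : -N / (2 * κ * x) = -(N / (2 * κ * x)) := by rw [neg_div]
        rw [h2]
        linarith [hexpo]
    _ = 4^d * Real.exp 2 * Real.exp (-‖u‖^2 / (c * x)) := by rw [← hN]
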